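/- Let A be a finite-dimensional algebra over a field k, T an algebra endomorphism of A, x an element of the Jacobson radical J(A), and a any element of A. Then the linear operator on A given by v ↦ x · T(v) · a is nilpotent. -/

import Mathlib

private lemma jac_left_inv {B : Type*} [Ring B] {u : B}
    (hu : u ∈ Ideal.jacobson (⊥ : Ideal B)) (s : B) : ∃ c : B, c * (1 - s * u) = 1 := by
  obtain ⟨z, hz⟩ := Ideal.mem_jacobson_iff.1 hu (-s)
  rw [Ideal.mem_bot] at hz
  refine ⟨z, ?_⟩
  have h1 : z * (1 - s * u) = z * -s * u + z := by noncomm_ring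
  rw [h1, ← sub_eq_zero]
  linear_combination (norm := noncomm_ring) hz

private lemma jac_mul_right {B : Type*} [Ring B] {u : B}
    (hu : u ∈ Ideal.jacobson (⊥ : Ideal B)) (v : B) : u * v ∈ Ideal.jacobson (⊥ : Ideal B) :=
  (Ideal.jacobson (⊥ : Ideal B)).mul_mem_right v hu

private lemma nakayama_aux {k B : Type*} [Field k] [Ring B] [Algebra k B] :
    ∀ s : Finset B,
      (Submodule.span B (s : Set B) : Set B) ⊆
        ((Submodule.restrictScalars k (Ideal.jacobson (⊥ : Ideal B))) *
          (Submodule.restrictScalars k (Submodule.span B (s : Set B))) : Submodule k B) →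
      Submodule.span B (s : Set B) = ⊥ := by
  classical
  intro s
  induction s using Finset.strongInduction with
  | _ s ih =>
    rcases s.eq_empty_or_nonempty with rfl | ⟨g, hg⟩
    · intro _; simp
    · intro hsub
      have hgmem : g ∈ ((Submodule.restrictScalars k (Ideal.jacobson (⊥ : Ideal B))) *
          (Submodule.restrictScalars k (Submodule.span B (s : Set B))) : Submodule k B) :=
        hsub (Submodule.subset_span hg)
      have hrep : ∃ v : B → B, (∀ j, v j ∈ Ideal.jacobson (⊥ : Ideal B)) ∧
          g = ∑ j ∈ s, v j * j := by
        refine Submodule.mul_induction_on hgmem ?_ ?_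
        · intro u hu n hn
          rw [Submodule.restrictScalars_mem] at hu hn
          obtain ⟨f, -, hf⟩ := Submodule.mem_span_finset.1 hn
          refine ⟨fun j => u * f j, fun j => jac_mul_right hu _, ?_⟩
          rw [← hf, Finset.mul_sum]
          exact Finset.sum_congr rfl fun j _ => by rw [smul_eq_mul, mul_assoc]
        · rintro a b ⟨va, hva, rfl⟩ ⟨vb, hvb, rfl⟩
          refine ⟨fun j => va j + vb j, fun j => add_mem (hva j) (hvb j), ?_⟩
          rw [← Finset.sum_add_distrib]
          exact Finset.sum_congr rfl fun j _ => (add_mul _ _ _).symm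
      obtain ⟨v, hv, hgeq⟩ := hrep
      have hsum : v g * g + ∑ j ∈ s.erase g, v j * j = g := by
        rw [Finset.add_sum_erase s (fun j => v j * j) hg]; exact hgeq.symm
      obtain ⟨c, hc⟩ := jac_left_inv (hv g) 1
      rw [one_mul] at hc
      have hq : (1 - v g) * g = ∑ j ∈ s.erase g, v j * j := by
        rw [sub_mul, one_mul]
        nth_rewrite 1 [← hsum]
        rw [add_sub_cancel_left]
      have hqmem : (∑ j ∈ s.erase g, v j * j) ∈
          Submodule.span B ((s.erase g : Finset B) : Set B) := by
        refine Submodule.sum_mem _ fun j hj => ?_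
        rw [← smul_eq_mul]
        exact Submodule.smul_mem _ _ (Submodule.subset_span hj)
      have hgspan : g ∈ Submodule.span B ((s.erase g : Finset B) : Set B) := by
        have h2 : g = c * ((1 - v g) * g) := by rw [← mul_assoc, hc, one_mul]
        rw [hq] at h2
        have h3 := Submodule.smul_mem _ c hqmem
        rwa [smul_eq_mul, ← h2] at h3
      have hse : Submodule.span B (s : Set B) =
          Submodule.span B ((s.erase g : Finset B) : Set B) := by
        conv_lhs => rw [← Finset.insert_erase hg]
        rw [Finset.coe_insert]
        exact Submodule.span_insert_eq_span hgspan
      have := ih (s.erase g) (Finset.erase_ssubset hg) (by rw [← hse]; exact hsub)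
      rw [hse, this]

private lemma jac_seq_zero (k B : Type*) [Field k] [Ring B] [Algebra k B]
    [FiniteDimensional k B] :
    ∃ N : ℕ, 0 < N ∧ ∀ g f : ℕ → B, g 0 = 1 → (∀ n, g (n + 1) = g n * f n) →
      (∀ i, f i ∈ Ideal.jacobson (⊥ : Ideal B)) → g N = 0 := by
  classical
  set Jb : Submodule k B := Submodule.restrictScalars k (Ideal.jacobson (⊥ : Ideal B)) with hJbdef
  have hJmem : ∀ {u : B}, u ∈ Jb ↔ u ∈ Ideal.jacobson (⊥ : Ideal B) := fun {u} => Iff.rfl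
  have hJJ : Jb * Jb ≤ Jb :=
    Submodule.mul_le.2 fun u hu v hv => hJmem.2 (jac_mul_right (hJmem.1 hu) v)
  have habsorb : ∀ n : ℕ, Jb ^ (n + 1) * Jb ≤ Jb ^ (n + 1) := by
    intro n
    induction n with
    | zero => rw [pow_one]; exact hJJ
    | succ n ihn =>
      rw [pow_succ]
      exact mul_le_mul' ihn (le_refl Jb)
  have hmono : ∀ i j : ℕ, i ≤ j → Jb ^ (j + 1) ≤ Jb ^ (i + 1) := by
    intro i j hij
    induction j, hij using Nat.le_induction with
    | base => exact le_rfl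
    | succ j hij ihj =>
      refine le_trans ?_ ihj
      rw [pow_succ]
      exact habsorb j
  obtain ⟨n0, hn0⟩ := IsArtinian.monotone_stabilizes
    (⟨fun n => OrderDual.toDual (Jb ^ (n + 1)), fun i j hij => hmono i j hij⟩ :
      ℕ →o (Submodule k B)ᵒᵈ)
  have hstab : Jb ^ (n0 + 1) = Jb ^ (n0 + 1 + 1) := by
    have := hn0 (n0 + 1) (by omega)
    exact this
  obtain ⟨s, hs⟩ := (IsNoetherian.noetherian (Jb ^ (n0 + 1)) : (Jb ^ (n0 + 1)).FG)
  have hleft : ∀ b w : B, w ∈ Jb ^ (n0 + 1) → b * w ∈ Jb ^ (n0 + 1) := by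
    intro b w hw
    rw [pow_succ'] at hw ⊢
    refine Submodule.mul_induction_on hw ?_ ?_
    · intro u hu p hp
      rw [← mul_assoc]
      exact Submodule.mul_mem_mul (hJmem.2 (Ideal.mul_mem_left _ b (hJmem.1 hu))) hp
    · intro p q hp hq
      rw [mul_add]
      exact add_mem hp hq
  let W' : Submodule B B :=
    { carrier := (Jb ^ (n0 + 1) : Submodule k B)
      add_mem' := fun h1 h2 => add_mem h1 h2
      zero_mem' := zero_mem _
      smul_mem' := fun b w hw => hleft b w hw }
  have hBspan : Submodule.span B (s : Set B) ≤ W' :=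
    Submodule.span_le.2 fun w hw => by
      have : w ∈ Submodule.span k (s : Set B) := Submodule.subset_span hw
      rw [hs] at this
      exact this
  have hsub : (Submodule.span B (s : Set B) : Set B) ⊆
      ((Submodule.restrictScalars k (Ideal.jacobson (⊥ : Ideal B))) *
        (Submodule.restrictScalars k (Submodule.span B (s : Set B))) : Submodule k B) := by
    intro xx hxx
    have h1 : xx ∈ Jb ^ (n0 + 1) := hBspan hxx
    have h2 : Jb ^ (n0 + 1) ≤ Jb * Submodule.restrictScalars k (Submodule.span B (s : Set B)) := by
      rw [hstab, pow_succ']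
      refine mul_le_mul' (le_refl Jb) ?_
      rw [← hs]
      exact Submodule.span_le_restrictScalars k B (s : Set B)
    exact h2 h1
  have hspan0 : Submodule.span B (s : Set B) = ⊥ := nakayama_aux s hsub
  have hpow0 : Jb ^ (n0 + 1) = ⊥ := by
    rw [← hs]
    have := Submodule.span_le_restrictScalars k B (s : Set B)
    rw [hspan0] at this
    simpa [le_bot_iff] using this
  refine ⟨n0 + 1, Nat.succ_pos _, ?_⟩
  intro g f hg0 hgs hf
  have hgn : ∀ n, g (n + 1) ∈ Jb ^ (n + 1) := by
    intro n
    induction n with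
    | zero =>
      rw [hgs 0, hg0, one_mul, pow_one]
      exact hJmem.2 (hf 0)
    | succ n ihn =>
      rw [hgs (n + 1), pow_succ]
      exact Submodule.mul_mem_mul ihn (hJmem.2 (hf (n + 1)))
  have := hgn n0
  rw [hpow0] at this
  simpa using this

/-- Let `A` be a finite-dimensional algebra over a field `k`, `T` an algebra endomorphism of
`A`, `x ∈ J(A)`, and `a ∈ A`.  Then the linear operator `l(x) ∘ r(a) ∘ T : v ↦ x * T v * a`
is nilpotent. -/
theorem trace_aux_endo_left_nilpotent
    {k A : Type*} [Field k] [Ring A] [Algebra k A] [FiniteDimensional k A]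
    (T : A →ₐ[k] A) (x : A) (hx : x ∈ Ideal.jacobson (⊥ : Ideal A)) (a : A) :
    IsNilpotent
      ((LinearMap.mulLeft k x) ∘ₗ (LinearMap.mulRight k a) ∘ₗ T.toLinearMap) := by
  classical
  set L : A →ₗ[k] A := T.toLinearMap with hLdef
  have hLapp : ∀ (n : ℕ) (v : A), (L ^ (n + 1)) v = (L ^ n) (T v) := by
    intro n v; rw [pow_succ]; rfl
  have hLapp' : ∀ (n : ℕ) (v : A), (L ^ (n + 1)) v = T ((L ^ n) v) := by
    intro n v; rw [pow_succ']; rfl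
  have hLone : ∀ n : ℕ, (L ^ n) (1 : A) = 1 := by
    intro n
    induction n with
    | zero => simp
    | succ n ih => rw [hLapp, map_one, ih]
  have hLmul : ∀ (n : ℕ) (u v : A), (L ^ n) (u * v) = (L ^ n) u * (L ^ n) v := by
    intro n
    induction n with
    | zero => intro u v; simp
    | succ n ih => intro u v; rw [hLapp, map_mul, ih, hLapp, hLapp]
  have hLpowmul : ∀ (n p : ℕ) (u : A), (L ^ n) (u ^ p) = ((L ^ n) u) ^ p := by
    intro n p u
    induction p with
    | zero => rw [pow_zero, pow_zero, hLone]
    | succ p ih => rw [pow_succ, pow_succ, hLmul, ih]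
  have hLadd : ∀ (m n : ℕ) (v : A), (L ^ (m + n)) v = (L ^ m) ((L ^ n) v) := by
    intro m n v; rw [pow_add]; rfl
  have hrange : ∀ i j : ℕ, i ≤ j → LinearMap.range (L ^ j) ≤ LinearMap.range (L ^ i) := by
    intro i j hij
    obtain ⟨d, rfl⟩ := Nat.exists_eq_add_of_le hij
    rintro v ⟨w, rfl⟩
    exact ⟨(L ^ d) w, (hLadd i d w).symm⟩
  obtain ⟨m0, hm0⟩ := IsArtinian.monotone_stabilizes
    (⟨fun n => OrderDual.toDual (LinearMap.range (L ^ n)),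
      fun i j hij => hrange i j hij⟩ : ℕ →o (Submodule k A)ᵒᵈ)
  have hstabr : ∀ i : ℕ, LinearMap.range (L ^ (m0 + i)) = LinearMap.range (L ^ m0) := by
    intro i
    have := hm0 (m0 + i) (by omega)
    exact this.symm
  obtain ⟨N, hNpos, hN⟩ := jac_seq_zero k A
  have hbx : ∀ b : A, (b * x) ^ N = 0 := fun b =>
    hN (fun n => (b * x) ^ n) (fun _ => b * x) (pow_zero _) (fun n => pow_succ _ _)
      (fun _ => Ideal.mul_mem_left _ b hx)
  set S : Subalgebra k A := (T ^ m0 : A →ₐ[k] A).range with hSdef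
  have hTLpow : ∀ (n : ℕ) (v : A), (T ^ n : A →ₐ[k] A) v = (L ^ n) v := by
    intro n
    induction n with
    | zero => intro v; rfl
    | succ n ih =>
      intro v
      rw [pow_succ, AlgHom.mul_apply, ih (T v), hLapp]
  have hSmem : ∀ w : A, w ∈ S ↔ ∃ b, (L ^ m0) b = w := by
    intro w
    constructor
    · rintro ⟨b, rfl⟩
      exact ⟨b, (hTLpow m0 b).symm⟩
    · rintro ⟨b, rfl⟩
      exact ⟨b, hTLpow m0 b⟩
  have hσmem : ∀ i : ℕ, (L ^ (m0 + i)) x ∈ S := fun i =>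
    (hSmem _).2 ⟨(L ^ i) x, (hLadd m0 i x).symm⟩
  set σ : ℕ → S := fun i => ⟨(L ^ (m0 + i)) x, hσmem i⟩ with hσdef
  have hσJ : ∀ i, σ i ∈ Ideal.jacobson (⊥ : Ideal S) := by
    intro i
    rw [Ideal.mem_jacobson_iff]
    intro y
    have hyv : (y : A) ∈ LinearMap.range (L ^ (m0 + i)) := by
      rw [hstabr i]
      obtain ⟨b, hb⟩ := (hSmem (y : A)).1 y.2
      exact ⟨b, hb⟩
    obtain ⟨b, hb⟩ := hyv
    have hval : ((y * σ i : S) : A) = (L ^ (m0 + i)) (b * x) := by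
      rw [MulMemClass.coe_mul, hσdef, hLmul, hb]
    have hnilval : (((y * σ i) ^ N : S) : A) = 0 := by
      rw [SubmonoidClass.coe_pow, hval, ← hLpowmul, hbx b, map_zero]
    have hnil : IsNilpotent (y * σ i) := ⟨N, by ext; rw [hnilval]; rfl⟩
    have hu : IsUnit ((y * σ i : S) + 1) := by
      have h1 := hnil.neg.isUnit_one_sub
      simpa [sub_neg_eq_add, add_comm] using h1
    obtain ⟨un, hun⟩ := hu
    refine ⟨↑un⁻¹, ?_⟩
    rw [Ideal.mem_bot]
    have hinv : (↑un⁻¹ : S) * (y * σ i + 1) = 1 := by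
      rw [← hun, Units.inv_mul]
    linear_combination (norm := noncomm_ring) hinv
  obtain ⟨N', hN'pos, hN'⟩ := jac_seq_zero k S
  set G : ℕ → S := fun r => Nat.rec 1 (fun r p => p * σ r) r with hGdef
  have hG0 : G 0 = 1 := rfl
  have hGs : ∀ r, G (r + 1) = G r * σ r := fun r => rfl
  have hGN' : G N' = 0 := hN' G σ hG0 hGs hσJ
  set y : ℕ → A := fun n => Nat.rec 1 (fun _ p => x * T p) n with hydef
  have hy0 : y 0 = 1 := rfl
  have hys : ∀ n, y (n + 1) = x * T (y n) := fun n => rfl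
  have hys' : ∀ n, y (n + 1) = y n * (L ^ n) x := by
    intro n
    induction n with
    | zero => rw [hys, hy0, map_one, mul_one, one_mul]; rfl
    | succ n ih =>
      rw [hys (n + 1), ih, map_mul, ← mul_assoc, ← hys n, hLapp', ih]
  have hsplit : ∀ p q, y (p + q) = y p * (L ^ p) (y q) := by
    intro p q
    induction q with
    | zero => rw [Nat.add_zero, hy0, hLone, mul_one]
    | succ q ih =>
      rw [show p + (q + 1) = (p + q) + 1 from rfl, hys' (p + q), ih, hys' q,
        hLmul, mul_assoc, hLadd]
  have hGval : ∀ r, ((G r : S) : A) = (L ^ m0) (y r) := by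
    intro r
    induction r with
    | zero => rw [hG0, hy0, hLone]; rfl
    | succ r ih =>
      rw [hGs, MulMemClass.coe_mul, ih]
      show (L ^ m0) (y r) * (L ^ (m0 + r)) x = (L ^ m0) (y (r + 1))
      rw [hLadd, ← hLmul, ← hys' r]
  have hyzero : y (m0 + N') = 0 := by
    rw [hsplit m0 N', ← hGval, hGN', ZeroMemClass.coe_zero, mul_zero]
  set z : ℕ → A := fun n => Nat.rec 1 (fun _ p => T p * a) n with hzdef
  have hz0 : z 0 = 1 := rfl
  have hzs : ∀ n, z (n + 1) = T (z n) * a := fun n => rfl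
  have hFn : ∀ n, ((LinearMap.mulLeft k x) ∘ₗ (LinearMap.mulRight k a) ∘ₗ L) ^ n =
      (LinearMap.mulLeft k (y n)) ∘ₗ (LinearMap.mulRight k (z n)) ∘ₗ (L ^ n) := by
    intro n
    induction n with
    | zero =>
      ext v
      simp [hy0, hz0]
    | succ n ih =>
      rw [pow_succ', ih]
      ext v
      simp only [Module.End.mul_apply, LinearMap.comp_apply, LinearMap.mulLeft_apply,
        LinearMap.mulRight_apply, hLapp' n v, hys n, hzs n, map_mul]
      show x * (T (y n * ((L ^ n) v * z n)) * a) = _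
      rw [map_mul, map_mul]
      noncomm_ring
  refine ⟨m0 + N', ?_⟩
  rw [hLdef] at hFn
  rw [hFn (m0 + N'), hyzero]
  ext v
  simp
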